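/- Let n_s ≥ 2, let Δs_0, …, Δs_{n_s-1} > 0, K_∥ > 0, γ ≥ 0, Δt > 0, M ≥ 0. Suppose (T_i^n)_{0≤i≤n_s-1, n∈ℕ} satisfies the implicit finite volume scheme (T_i^{n+1} − T_i^n)/Δt = (F_{i+1/2}^{n+1} − F_{i−1/2}^{n+1})/Δs_i, where for 0 ≤ i ≤ n_s−2, F_{i+1/2}^{n+1} = (4K_∥/7)·(|T_{i+1}^{n+1}|^{5/2} T_{i+1}^{n+1} − |T_i^{n+1}|^{5/2} T_i^{n+1})/(Δs_{i+1} + Δs_i), and F_{−1/2}^{n+1} = γ T_0^{n+1}, F_{n_s−1/2}^{n+1} = −γ T_{n_s−1}^{n+1}. If 0 ≤ T_i^0 ≤ M for all i, then 0 ≤ T_i^n ≤ M for all 0 ≤ i ≤ n_s−1 and all n ∈ ℕ. -/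
import Mathlib


lemma g_mono {x y : ℝ} (h : x ≤ y) :
    |x| ^ ((5:ℝ)/2) * x ≤ |y| ^ ((5:ℝ)/2) * y := by
  rcases le_or_gt 0 x with hx | hx
  · have hy : 0 ≤ y := hx.trans h
    have habs : |x| ≤ |y| := by rwa [abs_of_nonneg hx, abs_of_nonneg hy]
    exact mul_le_mul (Real.rpow_le_rpow (abs_nonneg x) habs (by norm_num)) h hx
      (Real.rpow_nonneg (abs_nonneg y) _)
  · rcases le_or_gt 0 y with hy | hy
    · have h1 : |x| ^ ((5:ℝ)/2) * x ≤ 0 :=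
        mul_nonpos_iff.mpr (Or.inl ⟨Real.rpow_nonneg (abs_nonneg x) _, hx.le⟩)
      have h2 : 0 ≤ |y| ^ ((5:ℝ)/2) * y :=
        mul_nonneg (Real.rpow_nonneg (abs_nonneg y) _) hy
      linarith
    · have habs : |y| ≤ |x| := by
        rw [abs_of_neg hx, abs_of_neg hy]; linarith
      have h2 : |y| ^ ((5:ℝ)/2) * (-y) ≤ |x| ^ ((5:ℝ)/2) * (-x) :=
        mul_le_mul (Real.rpow_le_rpow (abs_nonneg y) habs (by norm_num))
          (by linarith) (by linarith) (Real.rpow_nonneg (abs_nonneg x) _)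
      nlinarith [h2]

/-- Discrete maximum principle (L^∞ bound) part of Proposition 2.2 for the
backward Euler finite volume scheme for the 1D nonlinear heat equation.
Here `F n i` denotes the numerical flux `F_{i-1/2}^n` computed from the
values at time level `n`. -/
theorem implicit_scheme_maximum_principle
    (ns : ℕ) (hns : 2 ≤ ns)
    (Δs : ℕ → ℝ) (hΔs : ∀ i < ns, 0 < Δs i)
    (K γ Δt M : ℝ) (hK : 0 < K) (hγ : 0 ≤ γ) (hΔt : 0 < Δt) (hM : 0 ≤ M)
    (T F : ℕ → ℕ → ℝ)
    (hF0 : ∀ n, F n 0 = γ * T n 0)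
    (hFns : ∀ n, F n ns = -γ * T n (ns - 1))
    (hFint : ∀ n i, 1 ≤ i → i ≤ ns - 1 →
      F n i = (4 * K / 7) *
        (|T n i| ^ ((5:ℝ)/2) * T n i - |T n (i-1)| ^ ((5:ℝ)/2) * T n (i-1))
        / (Δs i + Δs (i-1)))
    (hscheme : ∀ n, ∀ i < ns,
      (T (n+1) i - T n i) / Δt = (F (n+1) (i+1) - F (n+1) i) / Δs i)
    (hinit : ∀ i < ns, 0 ≤ T 0 i ∧ T 0 i ≤ M) :
    ∀ n, ∀ i < ns, 0 ≤ T n i ∧ T n i ≤ M := by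
  intro n
  induction n with
  | zero => exact hinit
  | succ n ih =>
    obtain ⟨i0, hi0mem, hmin⟩ := Finset.exists_min_image (Finset.range ns) (T (n+1))
      ⟨0, Finset.mem_range.mpr (by omega)⟩
    obtain ⟨j0, hj0mem, hmax⟩ := Finset.exists_max_image (Finset.range ns) (T (n+1))
      ⟨0, Finset.mem_range.mpr (by omega)⟩
    have hi0 : i0 < ns := Finset.mem_range.mp hi0mem
    have hj0 : j0 < ns := Finset.mem_range.mp hj0mem
    have hmin' : ∀ i < ns, T (n+1) i0 ≤ T (n+1) i := fun i hi =>
      hmin i (Finset.mem_range.mpr hi)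
    have hmax' : ∀ i < ns, T (n+1) i ≤ T (n+1) j0 := fun i hi =>
      hmax i (Finset.mem_range.mpr hi)
    have key : ∀ i < ns, (T (n+1) i - T n i) * Δs i
        = (F (n+1) (i+1) - F (n+1) i) * Δt := by
      intro i hi
      have h := hscheme n i hi
      rwa [div_eq_div_iff hΔt.ne' (hΔs i hi).ne'] at h
    -- lower bound
    have hlow : 0 ≤ T (n+1) i0 := by
      by_contra hneg
      push_neg at hneg
      have hm : T (n+1) i0 ≤ 0 := hneg.le
      have hFle : F (n+1) i0 ≤ 0 := by
        rcases Nat.eq_zero_or_pos i0 with h0 | h0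
        · rw [h0] at hm ⊢
          rw [hF0]
          exact mul_nonpos_iff.mpr (Or.inl ⟨hγ, hm⟩)
        · have hle : i0 ≤ ns - 1 := by omega
          rw [hFint (n+1) i0 h0 hle]
          have hT : T (n+1) i0 ≤ T (n+1) (i0 - 1) := hmin' _ (by omega)
          have hg := g_mono hT
          have hden : 0 < Δs i0 + Δs (i0-1) := by
            have := hΔs i0 hi0; have := hΔs (i0-1) (by omega); linarith
          apply div_nonpos_of_nonpos_of_nonneg _ hden.le
          exact mul_nonpos_iff.mpr (Or.inl ⟨by positivity, by linarith⟩)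
      have hFge : 0 ≤ F (n+1) (i0+1) := by
        rcases eq_or_lt_of_le (show i0 + 1 ≤ ns by omega) with he | hlt
        · rw [he, hFns]
          have hns1 : ns - 1 = i0 := by omega
          rw [hns1]
          nlinarith [hm, hγ]
        · have hle : i0 + 1 ≤ ns - 1 := by omega
          rw [hFint (n+1) (i0+1) (by omega) hle]
          simp only [Nat.add_sub_cancel]
          have hT : T (n+1) i0 ≤ T (n+1) (i0+1) := hmin' _ (by omega)
          have hg := g_mono hT
          have hden : 0 < Δs (i0+1) + Δs i0 := by
            have := hΔs i0 hi0; have := hΔs (i0+1) (by omega); linarith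
          apply div_nonneg _ hden.le
          exact mul_nonneg (by positivity) (by linarith)
      have hkey := key i0 hi0
      have hTn := (ih i0 hi0).1
      have hs := hΔs i0 hi0
      nlinarith [mul_nonneg (show (0:ℝ) ≤ F (n+1) (i0+1) - F (n+1) i0 by linarith) hΔt.le,
        mul_nonneg hTn hs.le, mul_pos (neg_pos.mpr hneg) hs]
    -- upper bound
    have hM0 : 0 ≤ T (n+1) j0 := hlow.trans (hmin' j0 hj0)
    have hFge : 0 ≤ F (n+1) j0 := by
      rcases Nat.eq_zero_or_pos j0 with h0 | h0
      · rw [h0] at hM0 ⊢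
        rw [hF0]
        exact mul_nonneg hγ hM0
      · have hle : j0 ≤ ns - 1 := by omega
        rw [hFint (n+1) j0 h0 hle]
        have hT : T (n+1) (j0 - 1) ≤ T (n+1) j0 := hmax' _ (by omega)
        have hg := g_mono hT
        have hden : 0 < Δs j0 + Δs (j0-1) := by
          have := hΔs j0 hj0; have := hΔs (j0-1) (by omega); linarith
        apply div_nonneg _ hden.le
        exact mul_nonneg (by positivity) (by linarith)
    have hFle : F (n+1) (j0+1) ≤ 0 := by
      rcases eq_or_lt_of_le (show j0 + 1 ≤ ns by omega) with he | hlt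
      · rw [he, hFns]
        have hns1 : ns - 1 = j0 := by omega
        rw [hns1]
        nlinarith [hM0, hγ]
      · have hle : j0 + 1 ≤ ns - 1 := by omega
        rw [hFint (n+1) (j0+1) (by omega) hle]
        simp only [Nat.add_sub_cancel]
        have hT : T (n+1) (j0+1) ≤ T (n+1) j0 := hmax' _ (by omega)
        have hg := g_mono hT
        have hden : 0 < Δs (j0+1) + Δs j0 := by
          have := hΔs j0 hj0; have := hΔs (j0+1) (by omega); linarith
        apply div_nonpos_of_nonpos_of_nonneg _ hden.le
        exact mul_nonpos_iff.mpr (Or.inl ⟨by positivity, by linarith⟩)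
    have hkey := key j0 hj0
    have hTn := (ih j0 hj0).2
    have hs := hΔs j0 hj0
    have hup : T (n+1) j0 ≤ M := by
      nlinarith [mul_nonneg (show (0:ℝ) ≤ F (n+1) j0 - F (n+1) (j0+1) by linarith) hΔt.le]
    exact fun i hi => ⟨hlow.trans (hmin' i hi), (hmax' i hi).trans hup⟩
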